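/- arXiv:2512.10567 — 3 statements merged into one kernel-verified Lean document; each statement's English description precedes it below -/
import Mathlib

section
/- Let n ≥ 1 and q ∈ ℂ nonzero. Then the family of PBW monomials z^a y^b x^c, indexed by triples of multi-indices (a, b, c) ∈ (Fin n → ℕ)³, is a basis of 𝔥_n(q) as a ℂ-vector space (the family is linearly independent and spans 𝔥_n(q)). -/
noncomputable section

open scoped BigOperators

namespace QHeisenberg

/-- Index type for the `3n` generators: `x`-, `y`-, and `z`-variables. -/
abbrev GenIdx (n : ℕ) := Fin n ⊕ (Fin n ⊕ Fin n)

/-- The `x_i` generator in the free algebra. -/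
def fX (n : ℕ) (i : Fin n) : FreeAlgebra ℂ (GenIdx n) := FreeAlgebra.ι ℂ (Sum.inl i)

/-- The `y_i` generator in the free algebra. -/
def fY (n : ℕ) (i : Fin n) : FreeAlgebra ℂ (GenIdx n) := FreeAlgebra.ι ℂ (Sum.inr (Sum.inl i))

/-- The `z_i` generator in the free algebra. -/
def fZ (n : ℕ) (i : Fin n) : FreeAlgebra ℂ (GenIdx n) := FreeAlgebra.ι ℂ (Sum.inr (Sum.inr i))

/-- The defining relations of the q-Heisenberg algebra `𝔥_n(q)`. -/
inductive Rel (n : ℕ) (q : ℂ) :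
    FreeAlgebra ℂ (GenIdx n) → FreeAlgebra ℂ (GenIdx n) → Prop
  | xx (i j : Fin n) : Rel n q (fX n i * fX n j) (fX n j * fX n i)
  | yy (i j : Fin n) : Rel n q (fY n i * fY n j) (fY n j * fY n i)
  | zz (i j : Fin n) : Rel n q (fZ n i * fZ n j) (fZ n j * fZ n i)
  | xz (i : Fin n) : Rel n q (fX n i * fZ n i) (q • (fZ n i * fX n i))
  | yz (i : Fin n) : Rel n q (fY n i * fZ n i) (q⁻¹ • (fZ n i * fY n i))
  | xy (i : Fin n) : Rel n q (fX n i * fY n i) (q⁻¹ • (fY n i * fX n i) + fZ n i)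
  | xyne (i j : Fin n) : i ≠ j → Rel n q (fX n i * fY n j) (fY n j * fX n i)
  | xzne (i j : Fin n) : i ≠ j → Rel n q (fX n i * fZ n j) (fZ n j * fX n i)
  | yzne (i j : Fin n) : i ≠ j → Rel n q (fY n i * fZ n j) (fZ n j * fY n i)

/-- The q-Heisenberg algebra `𝔥_n(q)`. -/
abbrev H (n : ℕ) (q : ℂ) := RingQuot (Rel n q)

/-- The generator `x_i` of `𝔥_n(q)`. -/
def X (n : ℕ) (q : ℂ) (i : Fin n) : H n q := RingQuot.mkAlgHom ℂ (Rel n q) (fX n i)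

/-- The generator `y_i` of `𝔥_n(q)`. -/
def Y (n : ℕ) (q : ℂ) (i : Fin n) : H n q := RingQuot.mkAlgHom ℂ (Rel n q) (fY n i)

/-- The generator `z_i` of `𝔥_n(q)`. -/
def Z (n : ℕ) (q : ℂ) (i : Fin n) : H n q := RingQuot.mkAlgHom ℂ (Rel n q) (fZ n i)

/-- `q` is not a root of unity: `q ^ k ≠ 1` for every `k ≥ 1`. -/
def NotRootOfUnity (q : ℂ) : Prop := ∀ k : ℕ, 1 ≤ k → q ^ k ≠ 1

end QHeisenberg

namespace QHeisenberg

/-- Ordered product `f 0 * f 1 * ⋯ * f (n-1)`, taken in increasing order of the index. -/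
def ordProd {A : Type*} [Monoid A] (n : ℕ) (f : Fin n → A) : A :=
  ((List.finRange n).map f).prod

/-- The PBW monomial `z^a y^b x^c` of `𝔥_n(q)`. -/
def pbw (n : ℕ) (q : ℂ) (a b c : Fin n → ℕ) : H n q :=
  ordProd n (fun i => Z n q i ^ a i) * ordProd n (fun i => Y n q i ^ b i) *
    ordProd n (fun i => X n q i ^ c i)

/-- Index triples for PBW monomials. -/
abbrev Mi (n : ℕ) := (Fin n → ℕ) × (Fin n → ℕ) × (Fin n → ℕ)

/-- The free module with basis the PBW index triples. -/
abbrev V (n : ℕ) := Mi n →₀ ℂ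

variable {n : ℕ} {q : ℂ}

def inc (i : Fin n) (a : Fin n → ℕ) : Fin n → ℕ := a + Pi.single i 1
def dec (i : Fin n) (a : Fin n → ℕ) : Fin n → ℕ := a - Pi.single i 1

lemma inc_self (i : Fin n) (a : Fin n → ℕ) : inc i a i = a i + 1 := by simp [inc]
lemma inc_ne {i j : Fin n} (h : j ≠ i) (a : Fin n → ℕ) : inc i a j = a j := by
  simp [inc, Pi.single_eq_of_ne h]
lemma dec_ne {i j : Fin n} (h : j ≠ i) (a : Fin n → ℕ) : dec i a j = a j := by
  simp [dec, Pi.single_eq_of_ne h]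
lemma dec_inc (i : Fin n) (a : Fin n → ℕ) : dec i (inc i a) = a := by
  funext k; by_cases h : k = i <;> simp [inc, dec, Pi.single_apply, h]
lemma inc_dec {i : Fin n} {a : Fin n → ℕ} (h : a i ≠ 0) : inc i (dec i a) = a := by
  funext k
  by_cases hk : k = i
  · subst hk; simp [inc, dec, Pi.single_apply]; omega
  · simp [inc, dec, Pi.single_apply, hk]
lemma inc_comm (i j : Fin n) (a : Fin n → ℕ) : inc i (inc j a) = inc j (inc i a) := by
  simp [inc, add_right_comm]
lemma dec_comm (i j : Fin n) (a : Fin n → ℕ) : dec i (dec j a) = dec j (dec i a) := by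
  funext k; simp only [dec, Pi.sub_apply, Pi.single_apply]; omega
lemma dec_inc_ne {i j : Fin n} (h : i ≠ j) (a : Fin n → ℕ) :
    dec i (inc j a) = inc j (dec i a) := by
  funext k
  simp only [dec, inc, Pi.sub_apply, Pi.add_apply, Pi.single_apply]
  by_cases h1 : k = i <;> by_cases h2 : k = j
  · exact absurd (h1.symm.trans h2) h
  · simp [h1, h2, h, h.symm]
  · simp [h1, h2, h, h.symm]
  · simp [h1, h2, h, h.symm]

/-- `beta q k = 1 + q⁻² + ⋯ + q^{-2(k-1)}`. -/
def beta (q : ℂ) : ℕ → ℂ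
  | 0 => 0
  | k + 1 => q⁻¹ ^ 2 * beta q k + 1

@[simp] lemma beta_zero : beta q 0 = 0 := rfl
lemma beta_succ (k : ℕ) : beta q (k + 1) = q⁻¹ ^ 2 * beta q k + 1 := rfl

/-- Linear operator on `V n` determined by its values on basis vectors. -/
def op (f : Mi n → V n) : V n →ₗ[ℂ] V n := Finsupp.linearCombination ℂ f

/-- Basis vector of `V n`. -/
def dm (m : Mi n) : V n := Finsupp.single m 1

@[simp] lemma op_dm (f : Mi n → V n) (m : Mi n) : op f (dm m) = f m := by
  simp [op, dm]

lemma End_ext {f g : V n →ₗ[ℂ] V n} (h : ∀ m : Mi n, f (dm m) = g (dm m)) : f = g := by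
  apply Module.Basis.ext (Finsupp.basisSingleOne)
  intro m
  simpa [dm, Finsupp.coe_basisSingleOne] using h m

/-- Action of `z_i`. -/
def Az (i : Fin n) : V n →ₗ[ℂ] V n := op fun m => dm (inc i m.1, m.2.1, m.2.2)
/-- Action of `y_i`. -/
def Ay (q : ℂ) (i : Fin n) : V n →ₗ[ℂ] V n :=
  op fun m => (q⁻¹ ^ m.1 i) • dm (m.1, inc i m.2.1, m.2.2)
/-- Action of `x_i`. -/
def Ax (q : ℂ) (i : Fin n) : V n →ₗ[ℂ] V n :=
  op fun m => (q ^ m.1 i * q⁻¹ ^ m.2.1 i) • dm (m.1, m.2.1, inc i m.2.2)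
    + (q ^ m.1 i * beta q (m.2.1 i)) • dm (inc i m.1, dec i m.2.1, m.2.2)

lemma Az_dm (i : Fin n) (a b c : Fin n → ℕ) : Az i (dm (a, b, c)) = dm (inc i a, b, c) :=
  op_dm _ _
lemma Ay_dm (i : Fin n) (a b c : Fin n → ℕ) :
    Ay q i (dm (a, b, c)) = (q⁻¹ ^ a i) • dm (a, inc i b, c) := op_dm _ _
lemma Ax_dm (i : Fin n) (a b c : Fin n → ℕ) :
    Ax q i (dm (a, b, c)) = (q ^ a i * q⁻¹ ^ b i) • dm (a, b, inc i c)
      + (q ^ a i * beta q (b i)) • dm (inc i a, dec i b, c) := op_dm _ _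


section Rels
variable (hq : q ≠ 0)

lemma qq_cancel (hq : q ≠ 0) (k : ℕ) : q⁻¹ ^ k * q ^ k = 1 := by
  rw [← mul_pow, inv_mul_cancel₀ hq, one_pow]

lemma rel_zz (i j : Fin n) : Az (n := n) i * Az j = Az j * Az i := by
  apply End_ext; rintro ⟨a, b, c⟩
  simp [Module.End.mul_apply, Az_dm, inc_comm i j]

lemma rel_yy (i j : Fin n) : Ay q i * Ay q j = Ay q j * Ay q i := by
  apply End_ext; rintro ⟨a, b, c⟩
  simp only [Module.End.mul_apply, Ay_dm, map_smul, smul_smul]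
  rw [inc_comm i j, mul_comm]

lemma rel_yz (i : Fin n) : Ay q i * Az i = q⁻¹ • (Az i * Ay q i) := by
  apply End_ext; rintro ⟨a, b, c⟩
  simp only [Module.End.mul_apply, LinearMap.smul_apply, Az_dm, Ay_dm, map_smul, smul_smul,
    inc_self]
  rw [pow_succ]
  ring_nf

lemma rel_yz_ne {i j : Fin n} (hij : i ≠ j) : Ay q i * Az j = Az j * Ay q i := by
  apply End_ext; rintro ⟨a, b, c⟩
  simp [Module.End.mul_apply, Az_dm, Ay_dm, map_smul, inc_ne hij]

lemma rel_xz (i : Fin n) : Ax q i * Az i = q • (Az i * Ax q i) := by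
  apply End_ext; rintro ⟨a, b, c⟩
  simp only [Module.End.mul_apply, LinearMap.smul_apply, Az_dm, Ax_dm, map_add, map_smul,
    smul_add, smul_smul, inc_self]
  rw [pow_succ]
  ring_nf

lemma rel_xz_ne {i j : Fin n} (hij : i ≠ j) : Ax q i * Az j = Az j * Ax q i := by
  apply End_ext; rintro ⟨a, b, c⟩
  simp only [Module.End.mul_apply, Az_dm, Ax_dm, map_add, map_smul, inc_ne hij,
    inc_comm i j, dec_inc_ne hij.symm]

lemma rel_xy_ne {i j : Fin n} (hij : i ≠ j) : Ax q i * Ay q j = Ay q j * Ax q i := by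
  apply End_ext; rintro ⟨a, b, c⟩
  simp only [Module.End.mul_apply, Ay_dm, Ax_dm, map_add, map_smul, smul_add, smul_smul,
    inc_ne hij, inc_ne hij.symm, dec_inc_ne hij, dec_inc_ne hij.symm]
  match_scalars <;> ring

lemma rel_xx (i j : Fin n) : Ax q i * Ax q j = Ax q j * Ax q i := by
  by_cases hij : i = j
  · subst hij; rfl
  apply End_ext; rintro ⟨a, b, c⟩
  simp only [Module.End.mul_apply, Ax_dm, map_add, map_smul, smul_add, smul_smul,
    inc_ne hij, inc_ne (Ne.symm hij), dec_ne hij, dec_ne (Ne.symm hij),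
    dec_inc_ne hij, dec_inc_ne (Ne.symm hij), inc_comm i j, dec_comm i j]
  match_scalars <;> ring

lemma rel_xy (hq : q ≠ 0) (i : Fin n) :
    Ax q i * Ay q i = q⁻¹ • (Ay q i * Ax q i) + Az i := by
  apply End_ext; rintro ⟨a, b, c⟩
  simp only [Module.End.mul_apply, LinearMap.add_apply, LinearMap.smul_apply, Ax_dm, Ay_dm,
    Az_dm, map_add, map_smul, smul_add, smul_smul, inc_self, dec_inc]
  rcases Nat.eq_zero_or_pos (b i) with hb | hb
  · simp only [hb, beta_zero, beta_succ, mul_zero, zero_mul, smul_zero, zero_smul, add_zero,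
      mul_one, zero_add]
    match_scalars <;> simp only [inv_pow, one_div] <;> field_simp
  · rw [inc_dec (show b i ≠ 0 by omega), beta_succ]
    match_scalars <;> simp only [inv_pow, one_div] <;> field_simp <;> ring

end Rels

/-- The generators' images in `End (V n)`. -/
def gens (q : ℂ) : GenIdx n → Module.End ℂ (V n) :=
  Sum.elim (Ax q) (Sum.elim (Ay q) (fun i => Az i))

/-- Lift to the free algebra. -/
def φ (n : ℕ) (q : ℂ) : FreeAlgebra ℂ (GenIdx n) →ₐ[ℂ] Module.End ℂ (V n) :=
  FreeAlgebra.lift ℂ (gens q)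

@[simp] lemma φ_fX (i : Fin n) : φ n q (fX n i) = Ax q i := by
  simp [φ, fX, gens]
@[simp] lemma φ_fY (i : Fin n) : φ n q (fY n i) = Ay q i := by
  simp [φ, fY, gens]
@[simp] lemma φ_fZ (i : Fin n) : φ n q (fZ n i) = Az i := by
  simp [φ, fZ, gens]

lemma φ_rel (hq : q ≠ 0) ⦃u v : FreeAlgebra ℂ (GenIdx n)⦄ (h : Rel n q u v) :
    φ n q u = φ n q v := by
  induction h with
  | xx i j => simp only [map_mul, φ_fX]; exact rel_xx i j
  | yy i j => simp only [map_mul, φ_fY]; exact rel_yy i j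
  | zz i j => simp only [map_mul, φ_fZ]; exact rel_zz i j
  | xz i => simp only [map_mul, map_smul, φ_fX, φ_fZ]; exact rel_xz i
  | yz i => simp only [map_mul, map_smul, φ_fY, φ_fZ]; exact rel_yz i
  | xy i => simp only [map_mul, map_smul, map_add, φ_fX, φ_fY, φ_fZ]; exact rel_xy hq i
  | xyne i j hij => simp only [map_mul, φ_fX, φ_fY]; exact rel_xy_ne hij
  | xzne i j hij => simp only [map_mul, φ_fX, φ_fZ]; exact rel_xz_ne hij
  | yzne i j hij => simp only [map_mul, φ_fY, φ_fZ]; exact rel_yz_ne hij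

/-- The representation of `𝔥_n(q)` on `V n`. -/
def ρ (n : ℕ) {q : ℂ} (hq : q ≠ 0) : H n q →ₐ[ℂ] Module.End ℂ (V n) :=
  RingQuot.liftAlgHom ℂ ⟨φ n q, φ_rel hq⟩

variable (hq : q ≠ 0)

@[simp] lemma ρ_X (i : Fin n) : ρ n hq (X n q i) = Ax q i := by
  rw [X, ρ, RingQuot.liftAlgHom_mkAlgHom_apply]; simp
@[simp] lemma ρ_Y (i : Fin n) : ρ n hq (Y n q i) = Ay q i := by
  rw [Y, ρ, RingQuot.liftAlgHom_mkAlgHom_apply]; simp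
@[simp] lemma ρ_Z (i : Fin n) : ρ n hq (Z n q i) = Az i := by
  rw [Z, ρ, RingQuot.liftAlgHom_mkAlgHom_apply]; simp

lemma Az_pow (i : Fin n) (m : ℕ) (a b c : Fin n → ℕ) :
    (Az i ^ m) (dm (a, b, c)) = dm (a + Pi.single i m, b, c) := by
  induction m with
  | zero => simp
  | succ m ih =>
      rw [pow_succ', Module.End.mul_apply, ih, Az_dm]
      rw [show inc i (a + Pi.single i m) = a + Pi.single i (m + 1) by
        simp [inc, Pi.single_add, add_assoc]]

lemma Ay_pow (i : Fin n) (m : ℕ) (b c : Fin n → ℕ) :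
    (Ay q i ^ m) (dm (0, b, c)) = dm (0, b + Pi.single i m, c) := by
  induction m with
  | zero => simp
  | succ m ih =>
      rw [pow_succ', Module.End.mul_apply, ih, Ay_dm]
      rw [show inc i (b + Pi.single i m) = b + Pi.single i (m + 1) by
        simp [inc, Pi.single_add, add_assoc]]
      simp

lemma Ax_pow (i : Fin n) (m : ℕ) (c : Fin n → ℕ) :
    (Ax q i ^ m) (dm (0, 0, c)) = dm (0, 0, c + Pi.single i m) := by
  induction m with
  | zero => simp
  | succ m ih =>
      rw [pow_succ', Module.End.mul_apply, ih, Ax_dm]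
      rw [show inc i (c + Pi.single i m) = c + Pi.single i (m + 1) by
        simp [inc, Pi.single_add, add_assoc]]
      simp

lemma prodZ (L : List (Fin n)) (av : Fin n → ℕ) (a b c : Fin n → ℕ) :
    ((L.map fun i => Az i ^ av i).prod) (dm (a, b, c)) =
      dm (a + (L.map fun i => Pi.single i (av i)).sum, b, c) := by
  induction L with
  | nil => simp
  | cons i T ih =>
      rw [List.map_cons, List.prod_cons, Module.End.mul_apply, List.map_cons, List.sum_cons,
        ih, Az_pow]
      congr 2
      abel


lemma prodY (L : List (Fin n)) (bv : Fin n → ℕ) (b c : Fin n → ℕ) :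
    ((L.map fun i => Ay q i ^ bv i).prod) (dm (0, b, c)) =
      dm (0, b + (L.map fun i => Pi.single i (bv i)).sum, c) := by
  induction L with
  | nil => simp
  | cons i T ih =>
      rw [List.map_cons, List.prod_cons, Module.End.mul_apply, List.map_cons, List.sum_cons,
        ih, Ay_pow]
      rw [show b + (List.map (fun i => Pi.single i (bv i)) T).sum + Pi.single i (bv i)
          = b + (Pi.single i (bv i) + (List.map (fun i => Pi.single i (bv i)) T).sum) from by
        abel]

lemma prodX (L : List (Fin n)) (cv : Fin n → ℕ) (c : Fin n → ℕ) :
    ((L.map fun i => Ax q i ^ cv i).prod) (dm (0, 0, c)) =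
      dm (0, 0, c + (L.map fun i => Pi.single i (cv i)).sum) := by
  induction L with
  | nil => simp
  | cons i T ih =>
      rw [List.map_cons, List.prod_cons, Module.End.mul_apply, List.map_cons, List.sum_cons,
        ih, Ax_pow]
      rw [show c + (List.map (fun i => Pi.single i (cv i)) T).sum + Pi.single i (cv i)
          = c + (Pi.single i (cv i) + (List.map (fun i => Pi.single i (cv i)) T).sum) from by
        abel]

lemma finRange_single_sum (a : Fin n → ℕ) :
    ((List.finRange n).map fun i => Pi.single i (a i)).sum = a := by
  rw [← Fin.sum_univ_def, Finset.univ_sum_single]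

lemma ρ_pbw (a b c : Fin n → ℕ) :
    ρ n hq (pbw n q a b c) (dm (0, 0, 0)) = dm (a, b, c) := by
  have hz : ρ n hq (ordProd n fun i => Z n q i ^ a i) =
      ((List.finRange n).map fun i => Az (n := n) i ^ a i).prod := by
    rw [ordProd, map_list_prod, List.map_map]
    congr 1
    apply List.map_congr_left
    intro i _
    simp [Function.comp, map_pow]
  have hy : ρ n hq (ordProd n fun i => Y n q i ^ b i) =
      ((List.finRange n).map fun i => Ay q i ^ b i).prod := by
    rw [ordProd, map_list_prod, List.map_map]
    congr 1
    apply List.map_congr_left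
    intro i _
    simp [Function.comp, map_pow]
  have hx : ρ n hq (ordProd n fun i => X n q i ^ c i) =
      ((List.finRange n).map fun i => Ax q i ^ c i).prod := by
    rw [ordProd, map_list_prod, List.map_map]
    congr 1
    apply List.map_congr_left
    intro i _
    simp [Function.comp, map_pow]
  rw [pbw, map_mul, map_mul, hz, hy, hx, Module.End.mul_apply, Module.End.mul_apply,
    prodX, prodY, prodZ, finRange_single_sum, finRange_single_sum, finRange_single_sum,
    zero_add, zero_add, zero_add]

lemma pbw_linearIndependent (hq : q ≠ 0) :
    LinearIndependent ℂ
      (fun abc : Mi n => pbw n q abc.1 abc.2.1 abc.2.2) := by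
  classical
  let E : H n q →ₗ[ℂ] V n :=
    { toFun := fun h => ρ n hq h (dm (0, 0, 0))
      map_add' := by intro u v; simp [map_add]
      map_smul' := by intro r u; simp [map_smul] }
  have hdm : LinearIndependent ℂ (fun m : Mi n => dm (n := n) m) := by
    have := (Finsupp.basisSingleOne (ι := Mi n) (R := ℂ)).linearIndependent
    rwa [Finsupp.coe_basisSingleOne] at this
  apply LinearIndependent.of_comp E
  have : (E ∘ fun abc : Mi n => pbw n q abc.1 abc.2.1 abc.2.2) =
      fun m : Mi n => dm (n := n) m := by
    funext abc
    show ρ n hq (pbw n q abc.1 abc.2.1 abc.2.2) (dm (0, 0, 0)) = dm abc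
    rw [ρ_pbw]
  rw [this]
  exact hdm


/-! ### Relations in `H n q` -/

lemma hrel {u v : FreeAlgebra ℂ (GenIdx n)} (h : Rel n q u v) :
    RingQuot.mkAlgHom ℂ (Rel n q) u = RingQuot.mkAlgHom ℂ (Rel n q) v :=
  RingQuot.mkAlgHom_rel ℂ h

lemma Hxx (i j : Fin n) : X n q i * X n q j = X n q j * X n q i := by
  simp only [X, ← map_mul]; exact hrel (Rel.xx i j)
lemma Hyy (i j : Fin n) : Y n q i * Y n q j = Y n q j * Y n q i := by
  simp only [Y, ← map_mul]; exact hrel (Rel.yy i j)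
lemma Hzz (i j : Fin n) : Z n q i * Z n q j = Z n q j * Z n q i := by
  simp only [Z, ← map_mul]; exact hrel (Rel.zz i j)
lemma Hxz (i : Fin n) : X n q i * Z n q i = q • (Z n q i * X n q i) := by
  simp only [X, Z, ← map_mul, ← map_smul]; exact hrel (Rel.xz i)
lemma Hyz (i : Fin n) : Y n q i * Z n q i = q⁻¹ • (Z n q i * Y n q i) := by
  simp only [Y, Z, ← map_mul, ← map_smul]; exact hrel (Rel.yz i)
lemma Hxy (i : Fin n) :
    X n q i * Y n q i = q⁻¹ • (Y n q i * X n q i) + Z n q i := by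
  simp only [X, Y, Z, ← map_mul, ← map_smul, ← map_add]; exact hrel (Rel.xy i)
lemma Hxyne {i j : Fin n} (h : i ≠ j) : X n q i * Y n q j = Y n q j * X n q i := by
  simp only [X, Y, ← map_mul]; exact hrel (Rel.xyne i j h)
lemma Hxzne {i j : Fin n} (h : i ≠ j) : X n q i * Z n q j = Z n q j * X n q i := by
  simp only [X, Z, ← map_mul]; exact hrel (Rel.xzne i j h)
lemma Hyzne {i j : Fin n} (h : i ≠ j) : Y n q i * Z n q j = Z n q j * Y n q i := by
  simp only [Y, Z, ← map_mul]; exact hrel (Rel.yzne i j h)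

/-! ### Passing elements through products -/

lemma comm_pow {u v : H n q} (h : u * v = v * u) (m : ℕ) : u * v ^ m = v ^ m * u := by
  induction m with
  | zero => simp
  | succ m ih =>
      rw [pow_succ', ← mul_assoc, h, mul_assoc, ih, ← mul_assoc, ← pow_succ', pow_succ,
        mul_assoc]

lemma pass_pow {u v : H n q} {s : ℂ} (h : u * v = s • (v * u)) (m : ℕ) :
    u * v ^ m = s ^ m • (v ^ m * u) := by
  induction m with
  | zero => simp
  | succ m ih =>
      rw [pow_succ' v, ← mul_assoc, h, smul_mul_assoc, mul_assoc, ih, mul_smul_comm,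
        smul_smul, ← mul_assoc, ← pow_succ', ← pow_succ']

lemma list_comm {L : List (Fin n)} {f : Fin n → H n q} {g : H n q}
    (h : ∀ j ∈ L, g * f j = f j * g) :
    g * (L.map f).prod = (L.map f).prod * g := by
  induction L with
  | nil => simp
  | cons j T ih =>
      rw [List.map_cons, List.prod_cons, ← mul_assoc, h j (by simp), mul_assoc,
        ih (fun k hk => h k (by simp [hk])), ← mul_assoc]

lemma ordProd_decomp (i : Fin n) :
    ∃ P Q : (Fin n → H n q) → H n q,
      (∀ f, ordProd n f = P f * (f i * Q f)) ∧
      (∀ f f' : Fin n → H n q, (∀ j, j ≠ i → f' j = f j) → P f' = P f ∧ Q f' = Q f) ∧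
      (∀ (f : Fin n → H n q) (g : H n q), (∀ j, j ≠ i → g * f j = f j * g) →
        g * P f = P f * g ∧ g * Q f = Q f * g) := by
  obtain ⟨L₁, L₂, hsplit⟩ := List.append_of_mem (List.mem_finRange i)
  have hnd := List.nodup_finRange n
  rw [hsplit] at hnd
  obtain ⟨hn1, hn2, hdisj⟩ := List.nodup_append'.mp hnd
  have h1 : i ∉ L₁ := fun hi => hdisj hi (List.mem_cons_self (a := i) (l := L₂))
  have h2 : i ∉ L₂ := (List.nodup_cons.mp hn2).1
  refine ⟨fun f => (L₁.map f).prod, fun f => (L₂.map f).prod, ?_, ?_, ?_⟩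
  · intro f
    rw [ordProd, hsplit, List.map_append, List.prod_append, List.map_cons, List.prod_cons]
  · intro f f' hff
    constructor
    · exact congrArg List.prod (List.map_congr_left fun j hj =>
        hff j (fun hji => h1 (hji ▸ hj)))
    · exact congrArg List.prod (List.map_congr_left fun j hj =>
        hff j (fun hji => h2 (hji ▸ hj)))
  · intro f g hg
    constructor
    · exact list_comm fun j hj => hg j (fun hji => h1 (hji ▸ hj))
    · exact list_comm fun j hj => hg j (fun hji => h2 (hji ▸ hj))

/-- Multiplying an ordered product of powers by one more factor of `v i` on the left. -/
lemma mul_ordProd_pow_self (v : Fin n → H n q) (i : Fin n)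
    (hc : ∀ j, j ≠ i → v i * v j = v j * v i) (a : Fin n → ℕ) :
    v i * ordProd n (fun j => v j ^ a j) = ordProd n (fun j => v j ^ inc i a j) := by
  obtain ⟨P, Q, hPQ, hrepl, hcomm⟩ := ordProd_decomp i
  have hff : ∀ j, j ≠ i → (fun j => v j ^ inc i a j) j = (fun j => v j ^ a j) j :=
    fun j hj => by simp only [inc_ne hj]
  have hgc : ∀ j, j ≠ i → v i * v j ^ a j = v j ^ a j * v i :=
    fun j hj => comm_pow (hc j hj) (a j)
  obtain ⟨hP, hQ⟩ := hrepl _ _ hff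
  rw [hPQ, hPQ, hP, hQ, ← mul_assoc, (hcomm (fun j => v j ^ a j) (v i) hgc).1,
    mul_assoc, ← mul_assoc (v i), ← pow_succ']
  simp only [inc_self]

/-- Passing `g` through an ordered product of powers, picking up a scalar at slot `i`. -/
lemma pass_ordProd (v : Fin n → H n q) (i : Fin n) (g : H n q) (s : ℂ)
    (hcne : ∀ j, j ≠ i → g * v j = v j * g) (hci : g * v i = s • (v i * g)) (a : Fin n → ℕ) :
    g * ordProd n (fun j => v j ^ a j) =
      s ^ a i • (ordProd n (fun j => v j ^ a j) * g) := by
  obtain ⟨P, Q, hPQ, hrepl, hcomm⟩ := ordProd_decomp i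
  have hgc : ∀ j, j ≠ i → g * v j ^ a j = v j ^ a j * g :=
    fun j hj => comm_pow (hcne j hj) (a j)
  obtain ⟨hPg, hQg⟩ := hcomm (fun j => v j ^ a j) g hgc
  rw [hPQ, ← mul_assoc, hPg, mul_assoc, ← mul_assoc g, pass_pow hci, smul_mul_assoc,
    mul_assoc, hQg, mul_smul_comm, ← mul_assoc, ← mul_assoc, mul_assoc _ (v i ^ a i)]


lemma comm_ordProd (g : H n q) (v : Fin n → H n q) (a : Fin n → ℕ)
    (h : ∀ j, g * v j = v j * g) :
    g * ordProd n (fun j => v j ^ a j) = ordProd n (fun j => v j ^ a j) * g := by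
  rw [ordProd]
  exact list_comm fun j _ => comm_pow (h j) (a j)

lemma X_mul_Ypow (i : Fin n) (m : ℕ) :
    X n q i * Y n q i ^ (m + 1) =
      q⁻¹ ^ (m + 1) • (Y n q i ^ (m + 1) * X n q i)
        + beta q (m + 1) • (Z n q i * Y n q i ^ m) := by
  induction m with
  | zero => simpa [beta] using Hxy i
  | succ m ih =>
      rw [show X n q i * Y n q i ^ (m + 2) = (X n q i * Y n q i) * Y n q i ^ (m + 1) from by
          rw [pow_succ', ← mul_assoc],
        Hxy, add_mul, smul_mul_assoc, mul_assoc, ih, mul_add, mul_smul_comm, mul_smul_comm,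
        ← mul_assoc, ← pow_succ',
        show Y n q i * (Z n q i * Y n q i ^ m) = q⁻¹ • (Z n q i * Y n q i ^ (m + 1)) from by
          rw [← mul_assoc, Hyz, smul_mul_assoc, mul_assoc, ← pow_succ']]
      simp only [smul_add, smul_smul, beta_succ]
      match_scalars <;> ring

lemma X_mul_ordProdY (i : Fin n) (b : Fin n → ℕ) :
    X n q i * ordProd n (fun j => Y n q j ^ b j) =
      q⁻¹ ^ b i • (ordProd n (fun j => Y n q j ^ b j) * X n q i)
        + beta q (b i) • (Z n q i * ordProd n (fun j => Y n q j ^ dec i b j)) := by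
  obtain ⟨P, Q, hPQ, hrepl, hcomm⟩ := ordProd_decomp i
  set f : Fin n → H n q := fun j => Y n q j ^ b j with hf
  set f' : Fin n → H n q := fun j => Y n q j ^ dec i b j with hf'
  have hgc : ∀ j, j ≠ i → X n q i * f j = f j * X n q i :=
    fun j hj => comm_pow (Hxyne (Ne.symm hj)) (b j)
  obtain ⟨hPx, hQx⟩ := hcomm f _ hgc
  have hff' : ∀ j, j ≠ i → f' j = f j := fun j hj => by
    simp only [hf', hf, dec_ne hj]
  obtain ⟨hP', hQ'⟩ := hrepl f f' hff'
  rcases Nat.eq_zero_or_pos (b i) with hb | hb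
  · have hfi : f i = 1 := by simp [hf, hb]
    have hfi' : f' i = 1 := by
      have : dec i b i = 0 := by simp [dec, hb]
      simp [hf', this]
    rw [hb, pow_zero, beta_zero, zero_smul, add_zero, one_smul, hPQ f, hfi, one_mul,
      ← mul_assoc, hPx, mul_assoc, hQx, ← mul_assoc]
  · obtain ⟨m, hm⟩ : ∃ m, b i = m + 1 := ⟨b i - 1, by omega⟩
    have hfi : f i = Y n q i ^ (m + 1) := by simp [hf, hm]
    have hfi' : f' i = Y n q i ^ m := by
      have : dec i b i = m := by simp [dec, hm]
      simp [hf', this]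
    have hzc : ∀ j, j ≠ i → Z n q i * f j = f j * Z n q i :=
      fun j hj => comm_pow (Hyzne hj).symm (b j)
    obtain ⟨hPz, hQz⟩ := hcomm f _ hzc
    rw [hm, hPQ f, ← mul_assoc, hPx, mul_assoc, ← mul_assoc (X n q i), hfi, X_mul_Ypow i m,
      add_mul, mul_add, smul_mul_assoc, smul_mul_assoc, mul_smul_comm, mul_smul_comm]
    congr 1
    · -- q⁻¹^(m+1) • (P f * (Y^(m+1) * X * Q f)) = q⁻¹^(m+1) • (P f * (Y^(m+1) * Q f) * X)
      rw [mul_assoc (Y n q i ^ (m + 1)), hQx, ← mul_assoc (Y n q i ^ (m + 1)), ← mul_assoc,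
        ← mul_assoc, mul_assoc (P f)]
    · -- beta • (P f * (Z * Y^m * Q f)) = beta • (Z * (P f' * (f' i * Q f')))
      rw [hPQ f', hP', hQ', hfi', mul_assoc (Z n q i) (Y n q i ^ m),
        ← mul_assoc (P f), ← hPz, mul_assoc]

/-! ### Straightening -/

lemma Z_mul_pbw (i : Fin n) (a b c : Fin n → ℕ) :
    Z n q i * pbw n q a b c = pbw n q (inc i a) b c := by
  rw [pbw, pbw, ← mul_assoc, ← mul_assoc,
    mul_ordProd_pow_self (fun j => Z n q j) i (fun j _ => Hzz i j) a]

lemma Y_mul_pbw (i : Fin n) (a b c : Fin n → ℕ) :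
    Y n q i * pbw n q a b c = q⁻¹ ^ a i • pbw n q a (inc i b) c := by
  rw [pbw, pbw, ← mul_assoc, ← mul_assoc,
    pass_ordProd (fun j => Z n q j) i (Y n q i) q⁻¹
      (fun j hj => Hyzne (Ne.symm hj)) (Hyz i) a,
    smul_mul_assoc, smul_mul_assoc, mul_assoc _ (Y n q i),
    mul_ordProd_pow_self (fun j => Y n q j) i (fun j _ => Hyy i j) b]

lemma X_mul_pbw (i : Fin n) (a b c : Fin n → ℕ) :
    X n q i * pbw n q a b c =
      (q ^ a i * q⁻¹ ^ b i) • pbw n q a b (inc i c)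
        + (q ^ a i * beta q (b i)) • pbw n q (inc i a) (dec i b) c := by
  rw [pbw, ← mul_assoc, ← mul_assoc,
    pass_ordProd (fun j => Z n q j) i (X n q i) q
      (fun j hj => Hxzne (Ne.symm hj)) (Hxz i) a,
    smul_mul_assoc, smul_mul_assoc, mul_assoc _ (X n q i), X_mul_ordProdY i b]
  rw [mul_add, add_mul, smul_add, mul_smul_comm, mul_smul_comm, smul_mul_assoc,
    smul_mul_assoc, smul_smul, smul_smul]
  congr 1
  · -- q^(a i) * q⁻¹^(b i) • (Pz * (Py * X) * Px) = _ • pbw a b (inc i c)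
    rw [pbw, ← mul_assoc _ _ (X n q i), mul_assoc _ (X n q i),
      mul_ordProd_pow_self (fun j => X n q j) i (fun j _ => Hxx i j) c]
  · -- q^(a i) * beta • (Pz * (Z i * Py') * Px) = _ • pbw (inc i a) (dec i b) c
    rw [pbw, ← mul_assoc _ (Z n q i),
      (comm_ordProd (Z n q i) (fun j => Z n q j) a (fun j => Hzz i j)).symm,
      mul_ordProd_pow_self (fun j => Z n q j) i (fun j _ => Hzz i j) a]

lemma pbw_zero : pbw n q 0 0 0 = 1 := by
  simp [pbw, ordProd]


lemma pbw_span :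
    Submodule.span ℂ
        (Set.range (fun abc : Mi n => pbw n q abc.1 abc.2.1 abc.2.2)) = ⊤ := by
  set S := Submodule.span ℂ
    (Set.range (fun abc : Mi n => pbw n q abc.1 abc.2.1 abc.2.2)) with hS
  have hmem : ∀ a b c : Fin n → ℕ, pbw n q a b c ∈ S :=
    fun a b c => Submodule.subset_span ⟨(a, b, c), rfl⟩
  have h1S : (1 : H n q) ∈ S := by
    have := hmem 0 0 0
    rwa [pbw_zero] at this
  have hgen : ∀ (x : GenIdx n) (s : H n q), s ∈ S →
      RingQuot.mkAlgHom ℂ (Rel n q) (FreeAlgebra.ι ℂ x) * s ∈ S := by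
    intro x s hs
    induction hs using Submodule.span_induction with
    | mem s hs' =>
        obtain ⟨⟨a, b, c⟩, rfl⟩ := hs'
        rcases x with i | i | i
        · show X n q i * pbw n q a b c ∈ S
          rw [X_mul_pbw]
          exact add_mem (S.smul_mem _ (hmem _ _ _)) (S.smul_mem _ (hmem _ _ _))
        · show Y n q i * pbw n q a b c ∈ S
          rw [Y_mul_pbw]
          exact S.smul_mem _ (hmem _ _ _)
        · show Z n q i * pbw n q a b c ∈ S
          rw [Z_mul_pbw]
          exact hmem _ _ _
    | zero => rw [mul_zero]; exact S.zero_mem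
    | add u v _ _ hu hv => rw [mul_add]; exact add_mem hu hv
    | smul r u _ hu => rw [mul_smul_comm]; exact S.smul_mem r hu
  have key : ∀ w : FreeAlgebra ℂ (GenIdx n), ∀ s ∈ S,
      RingQuot.mkAlgHom ℂ (Rel n q) w * s ∈ S := by
    intro w
    induction w using FreeAlgebra.induction with
    | grade0 r =>
        intro s hs
        rw [AlgHom.commutes, ← Algebra.smul_def]
        exact S.smul_mem r hs
    | grade1 x => exact hgen x
    | mul u v hu hv =>
        intro s hs
        rw [map_mul, mul_assoc]
        exact hu _ (hv s hs)
    | add u v hu hv =>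
        intro s hs
        rw [map_add, add_mul]
        exact add_mem (hu s hs) (hv s hs)
  rw [Submodule.eq_top_iff']
  intro h
  obtain ⟨w, rfl⟩ := RingQuot.mkAlgHom_surjective ℂ (Rel n q) h
  simpa using key w 1 h1S

/-- For `n ≥ 1` and `q ≠ 0`, the PBW monomials `z^a y^b x^c`, indexed by
triples of multi-indices `(a, b, c)`, form a basis of `𝔥_n(q)` over `ℂ`: the family is
linearly independent and spans. -/
theorem pbw_basis (n : ℕ) (hn : 1 ≤ n) (q : ℂ) (hq : q ≠ 0) :
    LinearIndependent ℂ
        (fun abc : (Fin n → ℕ) × (Fin n → ℕ) × (Fin n → ℕ) =>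
          pbw n q abc.1 abc.2.1 abc.2.2) ∧
      Submodule.span ℂ
          (Set.range (fun abc : (Fin n → ℕ) × (Fin n → ℕ) × (Fin n → ℕ) =>
            pbw n q abc.1 abc.2.1 abc.2.2)) = ⊤ := by
  exact ⟨pbw_linearIndependent hq, pbw_span⟩

end QHeisenberg
end
end

section
/- Let n ≥ 1 and q ∈ ℂ nonzero. Then the subalgebra of 𝔥_n(q) generated by z_1, …, z_n is isomorphic as a ℂ-algebra to the polynomial algebra in n commuting variables: Algebra.adjoin ℂ {z_1, …, z_n} ≅ MvPolynomial (Fin n) ℂ, via an isomorphism sending the i-th variable to z_i. -/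
noncomputable section

open scoped BigOperators

noncomputable section

namespace QHeisenbergAux

open MvPolynomial

variable (n : ℕ) (q : ℂ)

abbrev Md := MvPolynomial (Fin n ⊕ Fin n) ℂ
abbrev Exp := (Fin n ⊕ Fin n) →₀ ℕ

/-- weighted shift operator on monomials -/
def op (w : Exp n → ℂ) (sh : Exp n → Exp n) : Module.End ℂ (Md n) :=
  (basisMonomials (Fin n ⊕ Fin n) ℂ).constr ℂ fun d => w d • monomial (sh d) (1 : ℂ)

lemma op_apply (w : Exp n → ℂ) (sh : Exp n → Exp n) (d : Exp n) :
    op n w sh (monomial d 1) = w d • monomial (sh d) 1 := by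
  have h := (basisMonomials (Fin n ⊕ Fin n) ℂ).constr_basis ℂ
    (fun d => w d • monomial (sh d) (1 : ℂ)) d
  have hb : (basisMonomials (Fin n ⊕ Fin n) ℂ) d = monomial d 1 := by
    rw [coe_basisMonomials]
  rw [op, ← hb, h]

lemma op_mul_apply (w1 w2 : Exp n → ℂ) (s1 s2 : Exp n → Exp n) (d : Exp n) :
    (op n w1 s1 * op n w2 s2) (monomial d 1)
      = (w2 d * w1 (s2 d)) • monomial (s1 (s2 d)) 1 := by
  rw [Module.End.mul_apply, op_apply, map_smul, op_apply, smul_smul, mul_comm]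

lemma op_ext {f g : Module.End ℂ (Md n)}
    (h : ∀ d : Exp n, f (monomial d 1) = g (monomial d 1)) : f = g := by
  apply (basisMonomials (Fin n ⊕ Fin n) ℂ).ext
  intro d
  have hb : (basisMonomials (Fin n ⊕ Fin n) ℂ) d = monomial d 1 := by
    rw [coe_basisMonomials]
  rw [hb]; exact h d

end QHeisenbergAux

namespace QHeisenbergAux

open MvPolynomial

variable (n : ℕ) (q : ℂ)

/-- coefficients for the `y` operator -/
def acoef (q : ℂ) : ℕ → ℂ
  | 0 => 0
  | m + 1 => q ^ 2 * acoef q m - q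

def eT (i : Fin n) : Exp n := Finsupp.single (Sum.inl i) 1
def eS (i : Fin n) : Exp n := Finsupp.single (Sum.inr i) 1

def Xop (i : Fin n) : Module.End ℂ (Md n) :=
  op n (fun d => q ^ d (Sum.inr i)) (fun d => d + eT n i)

def Zop (i : Fin n) : Module.End ℂ (Md n) :=
  op n (fun _ => 1) (fun d => d + eS n i)

def Yop (i : Fin n) : Module.End ℂ (Md n) :=
  op n (fun d => q⁻¹ ^ d (Sum.inr i) * acoef q (d (Sum.inl i)))
    (fun d => d - eT n i + eS n i)

-- exponent rearrangement for distinct coordinates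
lemma addsub (d : Exp n) {u v : Fin n ⊕ Fin n} (h : u ≠ v) (k l : ℕ) :
    (d + Finsupp.single u k) - Finsupp.single v l
      = (d - Finsupp.single v l) + Finsupp.single u k := by
  ext w
  by_cases hu : u = w
  · by_cases hv : v = w
    · exact absurd (hu.trans hv.symm) h
    · simp [Finsupp.single_apply, Finsupp.tsub_apply, hu, hv]
  · by_cases hv : v = w <;>
      simp [Finsupp.single_apply, Finsupp.tsub_apply, hu, hv]

end QHeisenbergAux

namespace QHeisenbergAux

open MvPolynomial

variable (n : ℕ) (q : ℂ)

@[simp] lemma eT_apply_inr (i j : Fin n) : eT n i (Sum.inr j) = 0 := by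
  simp [eT, Finsupp.single_apply]

@[simp] lemma eS_apply_inl (i j : Fin n) : eS n i (Sum.inl j) = 0 := by
  simp [eS, Finsupp.single_apply]

@[simp] lemma eT_apply_inl_self (i : Fin n) : eT n i (Sum.inl i) = 1 := by
  simp [eT]

@[simp] lemma eS_apply_inr_self (i : Fin n) : eS n i (Sum.inr i) = 1 := by
  simp [eS]

lemma eT_apply_inl_ne {i j : Fin n} (h : i ≠ j) : eT n i (Sum.inl j) = 0 := by
  simp [eT, Finsupp.single_apply, h]

lemma eS_apply_inr_ne {i j : Fin n} (h : i ≠ j) : eS n i (Sum.inr j) = 0 := by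
  simp [eS, Finsupp.single_apply, h]

lemma rel_xx (i j : Fin n) : Xop n q i * Xop n q j = Xop n q j * Xop n q i := by
  apply op_ext; intro d
  simp only [Xop, op_mul_apply, Finsupp.add_apply, eT_apply_inr, add_zero]
  rw [mul_comm, add_right_comm]

lemma rel_zz (i j : Fin n) : Zop n i * Zop n j = Zop n j * Zop n i := by
  apply op_ext; intro d
  simp only [Zop, op_mul_apply]
  rw [add_right_comm]

lemma rel_xz (i : Fin n) : Xop n q i * Zop n i = q • (Zop n i * Xop n q i) := by
  apply op_ext; intro d
  simp only [Xop, Zop, op_mul_apply, LinearMap.smul_apply, Finsupp.add_apply,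
    eS_apply_inr_self, smul_smul]
  rw [add_right_comm]
  ring_nf

lemma rel_yz (i : Fin n) : Yop n q i * Zop n i = q⁻¹ • (Zop n i * Yop n q i) := by
  apply op_ext; intro d
  simp only [Yop, Zop, op_mul_apply, LinearMap.smul_apply, Finsupp.add_apply,
    Finsupp.tsub_apply, eS_apply_inr_self, eS_apply_inl, eT_apply_inl_self, smul_smul,
    add_zero, tsub_zero]
  rw [show (d + eS n i) - eT n i + eS n i = ((d - eT n i) + eS n i) + eS n i by
    rw [eS, eT, addsub n d (by simp) 1 1]]
  ring_nf

end QHeisenbergAux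

namespace QHeisenbergAux

open MvPolynomial

variable (n : ℕ) (q : ℂ)

lemma rel_yy (i j : Fin n) : Yop n q i * Yop n q j = Yop n q j * Yop n q i := by
  rcases eq_or_ne i j with rfl | hij
  · rfl
  apply op_ext; intro d
  simp only [Yop, op_mul_apply, Finsupp.add_apply, Finsupp.tsub_apply,
    eS_apply_inl, eT_apply_inr, eT_apply_inl_ne n hij, eT_apply_inl_ne n hij.symm,
    eS_apply_inr_ne n hij, eS_apply_inr_ne n hij.symm, add_zero, tsub_zero]
  rw [show ((d - eT n j + eS n j) - eT n i + eS n i)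
        = ((d - eT n i + eS n i) - eT n j + eS n j) by
    simp only [eS, eT]; rw [addsub n (d - Finsupp.single (Sum.inl j) 1) (by simp) 1 1,
        addsub n (d - Finsupp.single (Sum.inl i) 1) (by simp) 1 1, tsub_right_comm, add_right_comm]]
  ring_nf

lemma rel_xzne (i j : Fin n) (hij : i ≠ j) :
    Xop n q i * Zop n j = Zop n j * Xop n q i := by
  apply op_ext; intro d
  simp only [Xop, Zop, op_mul_apply, Finsupp.add_apply,
    eS_apply_inr_ne n hij.symm, add_zero, one_mul, mul_one]
  rw [add_right_comm]

lemma rel_yzne (i j : Fin n) (hij : i ≠ j) :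
    Yop n q i * Zop n j = Zop n j * Yop n q i := by
  apply op_ext; intro d
  simp only [Yop, Zop, op_mul_apply, Finsupp.add_apply, Finsupp.tsub_apply,
    eS_apply_inl, eS_apply_inr_ne n hij.symm, add_zero, tsub_zero, one_mul, mul_one]
  rw [show ((d + eS n j) - eT n i + eS n i) = ((d - eT n i + eS n i) + eS n j) by
    simp only [eS, eT]; rw [addsub n d (by simp) 1 1, add_right_comm]]

lemma rel_xyne (i j : Fin n) (hij : i ≠ j) :
    Xop n q i * Yop n q j = Yop n q j * Xop n q i := by
  apply op_ext; intro d
  simp only [Xop, Yop, op_mul_apply, Finsupp.add_apply, Finsupp.tsub_apply,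
    eS_apply_inl, eT_apply_inr, eT_apply_inl_ne n hij, eT_apply_inl_ne n hij.symm,
    eS_apply_inr_ne n hij.symm, add_zero, tsub_zero]
  rw [show ((d - eT n j + eS n j) + eT n i) = ((d + eT n i) - eT n j + eS n j) by
    simp only [eS, eT]; rw [addsub n d (Sum.inl_injective.ne hij) 1 1, add_right_comm]]
  ring_nf

end QHeisenbergAux

namespace QHeisenbergAux

open MvPolynomial

lemma rel_xy (n : ℕ) (q : ℂ) (hq : q ≠ 0) (i : Fin n) :
    Xop n q i * Yop n q i = q⁻¹ • (Yop n q i * Xop n q i) + Zop n i := by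
  apply op_ext; intro d
  simp only [Xop, Yop, Zop, LinearMap.add_apply, LinearMap.smul_apply, op_mul_apply,
    op_apply, Finsupp.add_apply, Finsupp.tsub_apply, eT_apply_inr, eS_apply_inl,
    eT_apply_inl_self, eS_apply_inr_self, add_zero, tsub_zero, one_smul, smul_smul]
  rw [add_tsub_cancel_right]
  have hle : ∀ c : ℂ,
      (c * acoef q (d (Sum.inl i))) • monomial ((d - eT n i + eS n i) + eT n i) (1:ℂ)
        = (c * acoef q (d (Sum.inl i))) • monomial (d + eS n i) 1 := by
    intro c
    rcases Nat.eq_zero_or_pos (d (Sum.inl i)) with hm | hm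
    · rw [hm]; simp [acoef]
    · have : eT n i ≤ d := by
        rw [eT]; exact Finsupp.single_le_iff.mpr hm
      rw [add_right_comm, tsub_add_cancel_of_le this]
  have hk : q⁻¹ ^ d (Sum.inr i) * q ^ d (Sum.inr i) = 1 := by
    rw [inv_pow, inv_mul_cancel₀ (pow_ne_zero _ hq)]
  rw [show (q⁻¹ ^ d (Sum.inr i) * acoef q (d (Sum.inl i)) * q ^ (d (Sum.inr i) + 1))
      = (q⁻¹ ^ d (Sum.inr i) * q ^ (d (Sum.inr i) + 1)) * acoef q (d (Sum.inl i)) by ring,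
    hle]
  rw [show q ^ d (Sum.inr i) * (q⁻¹ ^ d (Sum.inr i) * acoef q (d (Sum.inl i) + 1))
      = acoef q (d (Sum.inl i) + 1) by rw [← mul_assoc, mul_comm (q ^ _), hk, one_mul]]
  nth_rewrite 3 [show (monomial (d + eS n i)) (1:ℂ) = (1:ℂ) • (monomial (d + eS n i)) (1:ℂ)
    from (one_smul ℂ _).symm]
  rw [← add_smul]
  congr 1
  rw [pow_succ, ← mul_assoc, hk, one_mul]
  show q * acoef q (d (Sum.inl i)) = q⁻¹ * (q ^ 2 * acoef q (d (Sum.inl i)) - q) + 1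
  field_simp
  ring

end QHeisenbergAux

namespace QHeisenbergAux

open MvPolynomial

variable (n : ℕ) (q : ℂ)

/-- the generator images -/
def gen : (Fin n ⊕ (Fin n ⊕ Fin n)) → Module.End ℂ (Md n) :=
  Sum.elim (Xop n q) (Sum.elim (Yop n q) (Zop n))

lemma Zop_eq_lmul (i : Fin n) :
    Zop n i = Algebra.lmul ℂ (Md n) (X (Sum.inr i)) := by
  apply op_ext; intro d
  rw [Zop, op_apply, one_smul]
  have : ((Algebra.lmul ℂ (Md n)) (X (Sum.inr i))) ((monomial d) 1)
      = X (Sum.inr i) * monomial d 1 := rfl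
  rw [this]
  rw [X, eS, monomial_mul, one_mul, add_comm]

end QHeisenbergAux


namespace QHeisenbergAux

open MvPolynomial

variable (n : ℕ) (q : ℂ)

def psifree : FreeAlgebra ℂ (QHeisenberg.GenIdx n) →ₐ[ℂ] Module.End ℂ (Md n) :=
  FreeAlgebra.lift ℂ (gen n q)

lemma psifree_rel (hq : q ≠ 0) :
    ∀ ⦃a b⦄, QHeisenberg.Rel n q a b → psifree n q a = psifree n q b := by
  intro a b h
  induction h with
  | xx i j =>
      simp only [psifree, QHeisenberg.fX, map_mul, FreeAlgebra.lift_ι_apply, gen,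
        Sum.elim_inl]
      exact rel_xx n q i j
  | yy i j =>
      simp only [psifree, QHeisenberg.fY, map_mul, FreeAlgebra.lift_ι_apply, gen,
        Sum.elim_inl, Sum.elim_inr]
      exact rel_yy n q i j
  | zz i j =>
      simp only [psifree, QHeisenberg.fZ, map_mul, FreeAlgebra.lift_ι_apply, gen,
        Sum.elim_inl, Sum.elim_inr]
      exact rel_zz n i j
  | xz i =>
      simp only [psifree, QHeisenberg.fX, QHeisenberg.fZ, map_mul, map_smul,
        FreeAlgebra.lift_ι_apply, gen, Sum.elim_inl, Sum.elim_inr]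
      exact rel_xz n q i
  | yz i =>
      simp only [psifree, QHeisenberg.fY, QHeisenberg.fZ, map_mul, map_smul,
        FreeAlgebra.lift_ι_apply, gen, Sum.elim_inl, Sum.elim_inr]
      exact rel_yz n q i
  | xy i =>
      simp only [psifree, QHeisenberg.fX, QHeisenberg.fY, QHeisenberg.fZ, map_mul,
        map_add, map_smul, FreeAlgebra.lift_ι_apply, gen, Sum.elim_inl, Sum.elim_inr]
      exact rel_xy n q hq i
  | xyne i j hij =>
      simp only [psifree, QHeisenberg.fX, QHeisenberg.fY, map_mul,
        FreeAlgebra.lift_ι_apply, gen, Sum.elim_inl, Sum.elim_inr]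
      exact rel_xyne n q i j hij
  | xzne i j hij =>
      simp only [psifree, QHeisenberg.fX, QHeisenberg.fZ, map_mul,
        FreeAlgebra.lift_ι_apply, gen, Sum.elim_inl, Sum.elim_inr]
      exact rel_xzne n q i j hij
  | yzne i j hij =>
      simp only [psifree, QHeisenberg.fY, QHeisenberg.fZ, map_mul,
        FreeAlgebra.lift_ι_apply, gen, Sum.elim_inl, Sum.elim_inr]
      exact rel_yzne n q i j hij

end QHeisenbergAux

namespace QHeisenberg

/-- The (commutative) subalgebra of `𝔥_n(q)` generated by `z_1, …, z_n`. -/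
def adjoinZ (n : ℕ) (q : ℂ) : Subalgebra ℂ (H n q) :=
  Algebra.adjoin ℂ (Set.range (Z n q))

/-- For `n ≥ 1` and `q ≠ 0`, the subalgebra of `𝔥_n(q)` generated by
`z_1, …, z_n` is isomorphic, as a `ℂ`-algebra, to the polynomial algebra in `n` commuting
variables, via an isomorphism sending the `i`-th variable to `z_i`. -/
theorem adjoin_z_iso_mvPolynomial (n : ℕ) (hn : 1 ≤ n) (q : ℂ) (hq : q ≠ 0) :
    ∃ e : MvPolynomial (Fin n) ℂ ≃ₐ[ℂ] adjoinZ n q,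
      ∀ i : Fin n, (e (MvPolynomial.X i) : H n q) = Z n q i := by
  classical
  set ψ : H n q →ₐ[ℂ] Module.End ℂ (QHeisenbergAux.Md n) :=
    RingQuot.liftAlgHom ℂ ⟨QHeisenbergAux.psifree n q, QHeisenbergAux.psifree_rel n q hq⟩
    with hψ
  have hZ : ∀ i, ψ (Z n q i) = QHeisenbergAux.Zop n i := by
    intro i
    rw [Z, hψ, RingQuot.liftAlgHom_mkAlgHom_apply]
    simp only [QHeisenbergAux.psifree, QHeisenberg.fZ, FreeAlgebra.lift_ι_apply,
      QHeisenbergAux.gen, Sum.elim_inr]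
  have hcomm : ∀ a ∈ Set.range (Z n q), ∀ b ∈ Set.range (Z n q), a * b = b * a := by
    rintro _ ⟨i, rfl⟩ _ ⟨j, rfl⟩
    have h := RingQuot.mkAlgHom_rel ℂ (Rel.zz (n := n) (q := q) i j)
    rw [map_mul, map_mul] at h
    exact h
  haveI : IsMulCommutative (adjoinZ n q) := Algebra.isMulCommutative_adjoin ℂ hcomm
  letI : CommRing (adjoinZ n q) := { (adjoinZ n q).toRing with mul_comm := this.is_comm.comm }
  set z' : Fin n → adjoinZ n q :=
    fun i => ⟨Z n q i, Algebra.subset_adjoin ⟨i, rfl⟩⟩ with hz'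
  set φ : MvPolynomial (Fin n) ℂ →ₐ[ℂ] adjoinZ n q := MvPolynomial.aeval z' with hφ
  have hinj : Function.Injective φ := by
    set F : adjoinZ n q →ₐ[ℂ] Module.End ℂ (QHeisenbergAux.Md n) :=
      ψ.comp (adjoinZ n q).val with hFdef
    have hG : F.comp φ = (Algebra.lmul ℂ (QHeisenbergAux.Md n)).comp
        (MvPolynomial.rename Sum.inr : MvPolynomial (Fin n) ℂ →ₐ[ℂ]
          MvPolynomial (Fin n ⊕ Fin n) ℂ) := by
      apply MvPolynomial.algHom_ext
      intro i
      simp only [AlgHom.coe_comp, Function.comp_apply, hφ, MvPolynomial.aeval_X,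
        MvPolynomial.rename_X, hFdef, hz', Subalgebra.coe_val, hZ,
        QHeisenbergAux.Zop_eq_lmul]
    have hGinj : Function.Injective (F.comp φ) := by
      rw [hG, AlgHom.coe_comp]
      exact (Algebra.lmul_injective).comp
        (MvPolynomial.rename_injective Sum.inr Sum.inr_injective)
    rw [AlgHom.coe_comp] at hGinj
    exact hGinj.of_comp
  have hrange : Set.range z' =
      ((↑) : adjoinZ n q → H n q) ⁻¹' (Set.range (Z n q)) := by
    ext t
    constructor
    · rintro ⟨i, rfl⟩
      exact ⟨i, rfl⟩
    · rintro ⟨i, hi⟩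
      exact ⟨i, Subtype.ext hi⟩
  have hsurj : Function.Surjective φ := by
    have h1 : φ.range = ⊤ := by
      rw [hφ, ← Algebra.adjoin_range_eq_range_aeval, hrange]
      exact Algebra.adjoin_adjoin_coe_preimage
    intro t
    have : t ∈ φ.range := h1 ▸ Algebra.mem_top
    obtain ⟨p, hp⟩ := this
    exact ⟨p, hp⟩
  refine ⟨AlgEquiv.ofBijective φ ⟨hinj, hsurj⟩, fun i => ?_⟩
  show ((φ (MvPolynomial.X i) : adjoinZ n q) : H n q) = Z n q i
  rw [hφ, MvPolynomial.aeval_X]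

end QHeisenberg
end
end
end

section
/- Let n ≥ 1 and let q ∈ ℂ be nonzero and not a root of unity. Fix an index i, and let v ∈ 𝔥_n(q) lie in the ℂ-linear span V of the 3n generators {x_j, y_j, z_j}. If v·z_j = q^{δ_{ij}}·z_j·v for all j (i.e., v z_i = q z_i v and v z_j = z_j v for j ≠ i), then v is a scalar multiple of x_i. Likewise, if v·z_j = q^{−δ_{ij}}·z_j·v for all j, then v is a scalar multiple of y_i. -/
noncomputable section

open scoped BigOperators

namespace QHeisenberg

/-- The `ℂ`-linear span `V` of the `3n` generators `x_i, y_i, z_i` of `𝔥_n(q)`. -/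
def genSpan (n : ℕ) (q : ℂ) : Submodule ℂ (H n q) :=
  Submodule.span ℂ (Set.range (X n q) ∪ Set.range (Y n q) ∪ Set.range (Z n q))

variable {n : ℕ} {q : ℂ}

abbrev M (n : ℕ) := (Fin n → ℤ) →₀ ℂ
def δv (n : ℕ) (i : Fin n) : Fin n → ℤ := Pi.single i 1
def Sop (q : ℂ) (i : Fin n) : Module.End ℂ (M n) :=
  Finsupp.lsum ℂ fun m => q ^ (m i) • Finsupp.lsingle m
def Top (n : ℕ) (i : Fin n) : Module.End ℂ (M n) :=
  Finsupp.lsum ℂ fun m => Finsupp.lsingle (m + δv n i)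
def Zop (q : ℂ) (i : Fin n) : Module.End ℂ (M n) := (q - q⁻¹) • (Top n i * Sop q i)
@[simp] lemma Sop_single (i : Fin n) (m : Fin n → ℤ) (c : ℂ) :
    Sop q i (Finsupp.single m c) = q ^ (m i) • Finsupp.single m c := by
  rw [Sop, Finsupp.lsum_single, LinearMap.smul_apply, Finsupp.lsingle_apply]
@[simp] lemma Top_single (i : Fin n) (m : Fin n → ℤ) (c : ℂ) :
    Top n i (Finsupp.single m c) = Finsupp.single (m + δv n i) c := by
  rw [Top, Finsupp.lsum_single, Finsupp.lsingle_apply]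
@[simp] lemma Zop_single (i : Fin n) (m : Fin n → ℤ) (c : ℂ) :
    Zop q i (Finsupp.single m c) = ((q - q⁻¹) * q ^ (m i)) • Finsupp.single (m + δv n i) c := by
  rw [Zop, LinearMap.smul_apply, Module.End.mul_apply, Sop_single, map_smul, Top_single, smul_smul]
@[simp] lemma δv_self (i : Fin n) : δv n i i = 1 := Pi.single_eq_same i 1
@[simp] lemma δv_ne {i j : Fin n} (h : j ≠ i) : δv n i j = 0 := Pi.single_eq_of_ne h 1

lemma rel_SS (i j : Fin n) : Sop q i * Sop q j = Sop q j * Sop q i := by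
  refine Finsupp.lhom_ext fun m c => ?_
  simp only [Module.End.mul_apply, Sop_single, map_smul, smul_smul]
  congr 1
  ring
lemma rel_TT (i j : Fin n) : Top n i * Top n j = Top n j * Top n i := by
  refine Finsupp.lhom_ext fun m c => ?_
  simp only [Module.End.mul_apply, Top_single]
  rw [add_right_comm]
lemma rel_ZZ (i j : Fin n) : Zop q i * Zop q j = Zop q j * Zop q i := by
  rcases eq_or_ne i j with rfl | hij
  · rfl
  refine Finsupp.lhom_ext fun m c => ?_
  simp only [Module.End.mul_apply, Zop_single, map_smul, smul_smul, Pi.add_apply,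
    δv_ne hij, δv_ne (Ne.symm hij), add_zero]
  rw [add_right_comm]
  congr 1
  ring
lemma rel_XZ (hq : q ≠ 0) (i : Fin n) : Sop q i * Zop q i = q • (Zop q i * Sop q i) := by
  refine Finsupp.lhom_ext fun m c => ?_
  simp only [Module.End.mul_apply, LinearMap.smul_apply, Zop_single, Sop_single, map_smul,
    smul_smul, Pi.add_apply, δv_self, zpow_add₀ hq, zpow_one]
  congr 1
  ring
lemma rel_YZ (hq : q ≠ 0) (i : Fin n) : Top n i * Zop q i = q⁻¹ • (Zop q i * Top n i) := by
  refine Finsupp.lhom_ext fun m c => ?_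
  simp only [Module.End.mul_apply, LinearMap.smul_apply, Zop_single, Top_single, map_smul,
    smul_smul, Pi.add_apply, δv_self, zpow_add₀ hq, zpow_one]
  congr 1
  field_simp
lemma rel_XY (hq : q ≠ 0) (i : Fin n) :
    Sop q i * Top n i = q⁻¹ • (Top n i * Sop q i) + Zop q i := by
  refine Finsupp.lhom_ext fun m c => ?_
  simp only [Module.End.mul_apply, LinearMap.add_apply, LinearMap.smul_apply, Zop_single,
    Top_single, Sop_single, map_smul, smul_smul, Pi.add_apply, δv_self, zpow_add₀ hq, zpow_one]
  rw [← add_smul]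
  congr 1
  field_simp
  ring
lemma rel_XYne {i j : Fin n} (h : i ≠ j) : Sop q i * Top n j = Top n j * Sop q i := by
  refine Finsupp.lhom_ext fun m c => ?_
  simp only [Module.End.mul_apply, Top_single, Sop_single, map_smul, Pi.add_apply,
    δv_ne h, add_zero]
lemma rel_XZne {i j : Fin n} (h : i ≠ j) :
    Sop q i * Zop q j = Zop q j * Sop q i := by
  refine Finsupp.lhom_ext fun m c => ?_
  simp only [Module.End.mul_apply, Zop_single, Sop_single, map_smul, smul_smul, Pi.add_apply,
    δv_ne h, add_zero]
  congr 1
  ring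
lemma rel_YZne {i j : Fin n} (h : i ≠ j) :
    Top n i * Zop q j = Zop q j * Top n i := by
  refine Finsupp.lhom_ext fun m c => ?_
  simp only [Module.End.mul_apply, Zop_single, Top_single, map_smul, Pi.add_apply,
    δv_ne (Ne.symm h), add_zero]
  rw [add_right_comm]

/-- The free-algebra lift of the representation. -/
def phiFree (n : ℕ) (q : ℂ) : FreeAlgebra ℂ (GenIdx n) →ₐ[ℂ] Module.End ℂ (M n) :=
  FreeAlgebra.lift ℂ (Sum.elim (Sop q) (Sum.elim (Top n) (Zop q)))

lemma phiFree_rel (hq : q ≠ 0) : ∀ ⦃x y : FreeAlgebra ℂ (GenIdx n)⦄, Rel n q x y →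
    phiFree n q x = phiFree n q y := by
  intro x y h
  induction h with
  | xx i j => simp only [fX, map_mul, phiFree, FreeAlgebra.lift_ι_apply, Sum.elim_inl]; exact rel_SS i j
  | yy i j => simp only [fY, map_mul, phiFree, FreeAlgebra.lift_ι_apply, Sum.elim_inr, Sum.elim_inl]; exact rel_TT i j
  | zz i j => simp only [fZ, map_mul, phiFree, FreeAlgebra.lift_ι_apply, Sum.elim_inr]; exact rel_ZZ i j
  | xz i => simp only [fX, fZ, map_mul, map_smul, phiFree, FreeAlgebra.lift_ι_apply, Sum.elim_inl, Sum.elim_inr]; exact rel_XZ hq i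
  | yz i => simp only [fY, fZ, map_mul, map_smul, phiFree, FreeAlgebra.lift_ι_apply, Sum.elim_inr, Sum.elim_inl]; exact rel_YZ hq i
  | xy i => simp only [fX, fY, fZ, map_mul, map_add, map_smul, phiFree, FreeAlgebra.lift_ι_apply, Sum.elim_inl, Sum.elim_inr]; exact rel_XY hq i
  | xyne i j h => simp only [fX, fY, map_mul, phiFree, FreeAlgebra.lift_ι_apply, Sum.elim_inl, Sum.elim_inr]; exact rel_XYne h
  | xzne i j h => simp only [fX, fZ, map_mul, phiFree, FreeAlgebra.lift_ι_apply, Sum.elim_inl, Sum.elim_inr]; exact rel_XZne h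
  | yzne i j h => simp only [fY, fZ, map_mul, phiFree, FreeAlgebra.lift_ι_apply, Sum.elim_inr, Sum.elim_inl]; exact rel_YZne h

/-- The representation of `𝔥_n(q)` on `M n`. -/
def phi (n : ℕ) (q : ℂ) (hq : q ≠ 0) : H n q →ₐ[ℂ] Module.End ℂ (M n) :=
  RingQuot.liftAlgHom ℂ ⟨phiFree n q, phiFree_rel hq⟩

@[simp] lemma phi_X (hq : q ≠ 0) (i : Fin n) : phi n q hq (X n q i) = Sop q i := by
  rw [phi, X, RingQuot.liftAlgHom_mkAlgHom_apply, phiFree, fX, FreeAlgebra.lift_ι_apply, Sum.elim_inl]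
@[simp] lemma phi_Y (hq : q ≠ 0) (i : Fin n) : phi n q hq (Y n q i) = Top n i := by
  rw [phi, Y, RingQuot.liftAlgHom_mkAlgHom_apply, phiFree, fY, FreeAlgebra.lift_ι_apply, Sum.elim_inr, Sum.elim_inl]
@[simp] lemma phi_Z (hq : q ≠ 0) (i : Fin n) : phi n q hq (Z n q i) = Zop q i := by
  rw [phi, Z, RingQuot.liftAlgHom_mkAlgHom_apply, phiFree, fZ, FreeAlgebra.lift_ι_apply, Sum.elim_inr, Sum.elim_inr]


lemma δv_ne_zero (j : Fin n) : δv n j ≠ 0 := fun h => by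
  have := congrFun h j; simp [δv] at this
lemma δv_inj {j l : Fin n} (h : δv n j = δv n l) : j = l := by
  by_contra hne
  have := congrFun h j
  simp [δv, Pi.single_apply, hne] at this
lemma pt_c (m : Fin n → ℤ) (k j l : Fin n) :
    (m + δv n k + δv n j = m + δv n k + δv n l) ↔ j = l := by
  constructor
  · intro h; exact δv_inj (add_left_cancel h)
  · rintro rfl; rfl
lemma pt_d (m : Fin n → ℤ) (k j l : Fin n) :
    (m + δv n j + δv n k = m + δv n k + δv n l) ↔ j = l := by
  rw [add_right_comm]; exact pt_c m k j l
lemma pt_a (m : Fin n → ℤ) (k j : Fin n) :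
    ¬ (m + δv n k + δv n j = m + δv n k) := by
  simp [δv_ne_zero]
lemma pt_b (m : Fin n → ℤ) (k j : Fin n) :
    ¬ (m + δv n j + δv n k = m + δv n k) := by
  rw [add_right_comm]; exact pt_a m k j
lemma pt_e (m : Fin n → ℤ) (k l : Fin n) :
    ¬ (m + δv n k = m + δv n k + δv n l) := fun h => pt_a m k l h.symm

lemma extract (hq : q ≠ 0) (hl : q - q⁻¹ ≠ 0) (W : Module.End ℂ (M n))
    (a b c : Fin n → ℂ) (μk : ℂ) (k : Fin n)
    (hW : ∀ m : Fin n → ℤ, W (Finsupp.single m 1) =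
      (∑ j, a j * q ^ (m j)) • Finsupp.single m (1:ℂ)
        + ∑ j, (b j + c j * ((q - q⁻¹) * q ^ (m j))) • Finsupp.single (m + δv n j) (1:ℂ))
    (hop : W * Zop q k = μk • (Zop q k * W)) :
    (∀ m : Fin n → ℤ, (∑ j, a j * q ^ ((m + δv n k) j)) = μk * ∑ j, a j * q ^ (m j)) ∧
    (∀ (l : Fin n) (m : Fin n → ℤ),
      q ^ (m k) * (b l + c l * ((q - q⁻¹) * q ^ ((m + δv n k) l)))
        = μk * ((b l + c l * ((q - q⁻¹) * q ^ (m l))) * q ^ ((m + δv n l) k))) := by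
  have key : ∀ m : Fin n → ℤ,
      ((q - q⁻¹) * q ^ (m k)) • ((∑ j, a j * q ^ ((m + δv n k) j)) • Finsupp.single (m + δv n k) (1:ℂ)
        + ∑ j, (b j + c j * ((q - q⁻¹) * q ^ ((m + δv n k) j))) • Finsupp.single (m + δv n k + δv n j) (1:ℂ))
      = μk • ((∑ j, a j * q ^ (m j)) • (((q - q⁻¹) * q ^ (m k)) • Finsupp.single (m + δv n k) (1:ℂ))
        + ∑ j, (b j + c j * ((q - q⁻¹) * q ^ (m j))) • (((q - q⁻¹) * q ^ ((m + δv n j) k)) • Finsupp.single (m + δv n j + δv n k) (1:ℂ))) := by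
    intro m
    have h0 := LinearMap.congr_fun hop (Finsupp.single m 1)
    rw [Module.End.mul_apply, LinearMap.smul_apply, Module.End.mul_apply, Zop_single,
      map_smul, hW, hW] at h0
    rw [h0]
    congr 1
    rw [map_add, map_smul, Zop_single, map_sum]
    congr 1
    refine Finset.sum_congr rfl fun j _ => ?_
    rw [map_smul, Zop_single]
  constructor
  · intro m
    have h1 := DFunLike.congr_fun (key m) (m + δv n k)
    simp only [Finsupp.smul_apply, Finsupp.add_apply, Finsupp.finset_sum_apply,
      Finsupp.single_apply, eq_self_iff_true, if_true, if_neg (pt_a m k _),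
      if_neg (pt_b m k _), smul_eq_mul, mul_ite, mul_one, mul_zero,
      Finset.sum_const_zero, add_zero] at h1
    have h2 : ((q - q⁻¹) * q ^ (m k)) *
        ((∑ j, a j * q ^ ((m + δv n k) j)) - μk * ∑ j, a j * q ^ (m j)) = 0 := by
      linear_combination h1
    have h3 := (mul_eq_zero.mp h2).resolve_left (mul_ne_zero hl (zpow_ne_zero _ hq))
    exact sub_eq_zero.mp h3
  · intro l m
    have h1 := DFunLike.congr_fun (key m) (m + δv n k + δv n l)
    simp only [Finsupp.smul_apply, Finsupp.add_apply, Finsupp.finset_sum_apply,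
      Finsupp.single_apply, if_neg (pt_e m k l), pt_c, pt_d, smul_eq_mul, mul_ite,
      mul_one, mul_zero, zero_add, Finset.sum_ite_eq', Finset.mem_univ, if_true,
      if_pos] at h1
    have h2 : (q - q⁻¹) *
        (q ^ (m k) * (b l + c l * ((q - q⁻¹) * q ^ ((m + δv n k) l)))
          - μk * ((b l + c l * ((q - q⁻¹) * q ^ (m l))) * q ^ ((m + δv n l) k))) = 0 := by
      linear_combination h1
    have h3 := (mul_eq_zero.mp h2).resolve_left hl
    exact sub_eq_zero.mp h3


lemma hW_sum (hq : q ≠ 0) (a b c : Fin n → ℂ) (m : Fin n → ℤ) :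
    phi n q hq ((∑ j, a j • X n q j) + (∑ j, b j • Y n q j) + (∑ j, c j • Z n q j))
        (Finsupp.single m 1)
      = (∑ j, a j * q ^ (m j)) • Finsupp.single m (1:ℂ)
        + ∑ j, (b j + c j * ((q - q⁻¹) * q ^ (m j))) • Finsupp.single (m + δv n j) (1:ℂ) := by
  simp only [map_add, map_sum, map_smul, phi_X, phi_Y, phi_Z, LinearMap.add_apply,
    LinearMap.sum_apply, LinearMap.smul_apply, Sop_single, Top_single, Zop_single, smul_smul]
  rw [add_assoc, ← Finset.sum_add_distrib, ← Finset.sum_smul]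
  congr 1
  refine Finset.sum_congr rfl fun j _ => ?_
  rw [← add_smul]

lemma aux (n : ℕ) (q : ℂ) (hq : q ≠ 0) (hq1 : q ≠ 1) (hq2 : q * q ≠ 1) (i : Fin n)
    (a b c μ : Fin n → ℂ) (hμ : ∀ k, k ≠ i → μ k = 1) (hμi : μ i ≠ 1)
    (h : ∀ k, ((∑ j, a j • X n q j) + (∑ j, b j • Y n q j) + (∑ j, c j • Z n q j)) * Z n q k
      = μ k • (Z n q k *
          ((∑ j, a j • X n q j) + (∑ j, b j • Y n q j) + (∑ j, c j • Z n q j)))) :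
    (∀ k, k ≠ i → a k = 0) ∧ (∀ l, l ≠ i → b l = 0) ∧ (∀ l, l ≠ i → c l = 0) ∧ c i = 0
      ∧ a i * (q - μ i) = 0 ∧ b i * (1 - μ i * q) = 0 := by
  have hl : q - q⁻¹ ≠ 0 := by
    intro h'
    apply hq2
    rw [sub_eq_zero] at h'
    nth_rewrite 2 [h']
    exact mul_inv_cancel₀ hq
  have hop : ∀ k, phi n q hq ((∑ j, a j • X n q j) + (∑ j, b j • Y n q j) + (∑ j, c j • Z n q j))
      * Zop q k = μ k • (Zop q k *
        phi n q hq ((∑ j, a j • X n q j) + (∑ j, b j • Y n q j) + (∑ j, c j • Z n q j))) := by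
    intro k
    have := congrArg (phi n q hq) (h k)
    rwa [map_mul, map_smul, map_mul, phi_Z] at this
  have facts := fun k => extract hq hl _ a b c (μ k) k (hW_sum hq a b c) (hop k)
  have FA : ∀ (k : Fin n) (m : Fin n → ℤ),
      (∑ j, a j * q ^ ((m + δv n k) j)) = μ k * ∑ j, a j * q ^ (m j) := fun k => (facts k).1
  have FB : ∀ (k l : Fin n) (m : Fin n → ℤ),
      q ^ (m k) * (b l + c l * ((q - q⁻¹) * q ^ ((m + δv n k) l)))
        = μ k * ((b l + c l * ((q - q⁻¹) * q ^ (m l))) * q ^ ((m + δv n l) k)) :=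
    fun k => (facts k).2
  -- Step 1 : a k = 0 for k ≠ i
  have ha : ∀ k, k ≠ i → a k = 0 := by
    intro k hk
    have h0 := FA k 0
    rw [hμ k hk, one_mul, zero_add] at h0
    have e : ∑ j, (a j * q ^ (δv n k j) - a j * q ^ ((0 : Fin n → ℤ) j)) = 0 := by
      rw [Finset.sum_sub_distrib, h0, sub_self]
    have e2 : ∑ j, (a j * q ^ (δv n k j) - a j * q ^ ((0 : Fin n → ℤ) j)) = a k * (q - 1) := by
      rw [Finset.sum_eq_single k]
      · simp only [δv_self, zpow_one, Pi.zero_apply, zpow_zero, mul_one]; ring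
      · intro j _ hj
        rw [δv_ne hj]
        simp
      · intro hk'
        exact absurd (Finset.mem_univ k) hk'
    rw [e2] at e
    exact (mul_eq_zero.mp e).resolve_right (sub_ne_zero.mpr hq1)
  -- Step 2 : b l = 0 and c l = 0 for l ≠ i
  have hbc : ∀ l, l ≠ i → b l = 0 ∧ c l = 0 := by
    intro l hli
    have h0 := FB i l 0
    simp only [zero_add, Pi.zero_apply, zpow_zero, one_mul, mul_one, δv_ne hli,
      δv_ne (Ne.symm hli)] at h0
    have h1 := FB i l (δv n l)
    simp only [Pi.add_apply, δv_ne (Ne.symm hli), δv_ne hli, δv_self, zpow_zero, zpow_one,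
      one_mul, mul_one, zero_add, add_zero] at h1
    have hu : (b l + c l * (q - q⁻¹)) * (1 - μ i) = 0 := by linear_combination h0
    have hu' : (b l + c l * ((q - q⁻¹) * q)) * (1 - μ i) = 0 := by linear_combination h1
    have hu0 : b l + c l * (q - q⁻¹) = 0 :=
      (mul_eq_zero.mp hu).resolve_right (sub_ne_zero.mpr (Ne.symm hμi))
    have hu0' : b l + c l * ((q - q⁻¹) * q) = 0 :=
      (mul_eq_zero.mp hu').resolve_right (sub_ne_zero.mpr (Ne.symm hμi))
    have hc : c l * ((q - q⁻¹) * (q - 1)) = 0 := by linear_combination hu0' - hu0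
    have hc0 : c l = 0 := by
      rcases mul_eq_zero.mp hc with h' | h'
      · exact h'
      · exact absurd h' (mul_ne_zero hl (sub_ne_zero.mpr hq1))
    refine ⟨?_, hc0⟩
    linear_combination hu0 - (q - q⁻¹) * hc0
  -- Step 3 : c i = 0
  have hexp : ∀ m : Fin n → ℤ, q ^ ((m + δv n i) i) = q ^ (m i) * q := by
    intro m
    rw [Pi.add_apply, δv_self, zpow_add₀ hq, zpow_one]
  have E1 := FB i i 0
  rw [hexp] at E1
  simp only [Pi.zero_apply, zpow_zero, one_mul, mul_one, zero_add] at E1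
  have E2 := FB i i (δv n i)
  rw [hexp] at E2
  simp only [δv_self, zpow_one] at E2
  have hci : c i = 0 := by
    have hc : c i * ((q - q⁻¹) * (q * q * ((q - 1) * (1 - μ i)))) = 0 := by
      linear_combination E2 - q * E1
    rcases mul_eq_zero.mp hc with h' | h'
    · exact h'
    · exact absurd h' (mul_ne_zero hl (mul_ne_zero (mul_ne_zero hq hq)
        (mul_ne_zero (sub_ne_zero.mpr hq1) (sub_ne_zero.mpr (Ne.symm hμi)))))
  -- Step 4 : a i * (q - μ i) = 0
  have hai : a i * (q - μ i) = 0 := by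
    have h0 := FA i 0
    rw [zero_add] at h0
    have eL : ∑ j, a j * q ^ (δv n i j) = a i * q := by
      rw [Finset.sum_eq_single i]
      · rw [δv_self, zpow_one]
      · intro j _ hj
        rw [ha j hj, zero_mul]
      · intro hk'
        exact absurd (Finset.mem_univ i) hk'
    have eR : ∑ j, a j * q ^ ((0 : Fin n → ℤ) j) = a i := by
      rw [Finset.sum_eq_single i]
      · simp
      · intro j _ hj
        rw [ha j hj, zero_mul]
      · intro hk'
        exact absurd (Finset.mem_univ i) hk'
    rw [eL, eR] at h0
    linear_combination h0
  -- Step 5 : b i * (1 - μ i * q) = 0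
  have hbi : b i * (1 - μ i * q) = 0 := by
    rw [hci] at E1
    simp only [zero_mul, add_zero] at E1
    linear_combination E1
  exact ⟨ha, fun l hl' => (hbc l hl').1, fun l hl' => (hbc l hl').2, hci, hai, hbi⟩


/-- Let `q` be nonzero and not a root of unity, and let `v` lie in the
span `V` of the generators.  If `v * z_j = q^{δ_{ij}} • (z_j * v)` for all `j`, then `v`
is a scalar multiple of `x_i`; likewise with `q^{-δ_{ij}}` and `y_i`. -/
theorem eigenvector_is_scalar_multiple (n : ℕ) (hn : 1 ≤ n) (q : ℂ) (hq : q ≠ 0)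
    (hq' : NotRootOfUnity q) (i : Fin n) (v : H n q) (hv : v ∈ genSpan n q) :
    ((∀ j : Fin n, v * Z n q j = (if j = i then q else 1) • (Z n q j * v)) →
        ∃ c : ℂ, v = c • X n q i) ∧
      ((∀ j : Fin n, v * Z n q j = (if j = i then q⁻¹ else 1) • (Z n q j * v)) →
        ∃ c : ℂ, v = c • Y n q i) := by
  have hq1 : q ≠ 1 := by
    intro h
    exact hq' 1 le_rfl (by rw [h, one_pow])
  have hq2 : q * q ≠ 1 := by
    intro h
    exact hq' 2 (by norm_num) (by rw [pow_two, h])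
  have hl : q - q⁻¹ ≠ 0 := by
    intro h'
    apply hq2
    rw [sub_eq_zero] at h'
    nth_rewrite 2 [h']
    exact mul_inv_cancel₀ hq
  rw [genSpan, Submodule.span_union, Submodule.span_union, Submodule.mem_sup] at hv
  obtain ⟨u, hu, w, hw, rfl⟩ := hv
  rw [Submodule.mem_sup] at hu
  obtain ⟨u1, hu1, u2, hu2, rfl⟩ := hu
  rw [Submodule.mem_span_range_iff_exists_fun] at hu1 hu2 hw
  obtain ⟨a, rfl⟩ := hu1
  obtain ⟨b, rfl⟩ := hu2
  obtain ⟨c, rfl⟩ := hw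
  constructor
  · intro hcond
    obtain ⟨ha, hb, hc, hci, hai, hbi⟩ := aux n q hq hq1 hq2 i a b c
      (fun j => if j = i then q else 1) (fun k hk => if_neg hk) (by simpa using hq1) hcond
    rw [if_pos rfl] at hbi
    have hbi0 : b i = 0 :=
      (mul_eq_zero.mp hbi).resolve_right (sub_ne_zero.mpr (Ne.symm hq2))
    refine ⟨a i, ?_⟩
    have hX : ∑ j, a j • X n q j = a i • X n q i := by
      rw [Finset.sum_eq_single i]
      · intro j _ hj
        rw [ha j hj, zero_smul]
      · intro hk'
        exact absurd (Finset.mem_univ i) hk'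
    have hY : ∑ j, b j • Y n q j = 0 := by
      refine Finset.sum_eq_zero fun j _ => ?_
      rcases eq_or_ne j i with rfl | hj
      · rw [hbi0, zero_smul]
      · rw [hb j hj, zero_smul]
    have hZ : ∑ j, c j • Z n q j = 0 := by
      refine Finset.sum_eq_zero fun j _ => ?_
      rcases eq_or_ne j i with rfl | hj
      · rw [hci, zero_smul]
      · rw [hc j hj, zero_smul]
    rw [hX, hY, hZ, add_zero, add_zero]
  · intro hcond
    have hqinv : q⁻¹ ≠ 1 := by
      intro h
      exact hq1 (by rw [← inv_inv q, h, inv_one])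
    obtain ⟨ha, hb, hc, hci, hai, hbi⟩ := aux n q hq hq1 hq2 i a b c
      (fun j => if j = i then q⁻¹ else 1) (fun k hk => if_neg hk) (by simpa using hqinv) hcond
    rw [if_pos rfl] at hai
    have hai0 : a i = 0 := (mul_eq_zero.mp hai).resolve_right hl
    refine ⟨b i, ?_⟩
    have hX : ∑ j, a j • X n q j = 0 := by
      refine Finset.sum_eq_zero fun j _ => ?_
      rcases eq_or_ne j i with rfl | hj
      · rw [hai0, zero_smul]
      · rw [ha j hj, zero_smul]
    have hY : ∑ j, b j • Y n q j = b i • Y n q i := by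
      rw [Finset.sum_eq_single i]
      · intro j _ hj
        rw [hb j hj, zero_smul]
      · intro hk'
        exact absurd (Finset.mem_univ i) hk'
    have hZ : ∑ j, c j • Z n q j = 0 := by
      refine Finset.sum_eq_zero fun j _ => ?_
      rcases eq_or_ne j i with rfl | hj
      · rw [hci, zero_smul]
      · rw [hc j hj, zero_smul]
    rw [hX, hY, hZ, zero_add, add_zero]

end QHeisenberg
end
end
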